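/- Let μ > 0 and for r > 0 define G(r) = 2πλ r · exp(-(σ²μ/P)(r⁴ + z r²)) with z = (λπP/(σ²μ))(√μ·arctan(√μ) + 1). Then ∫₀^∞ G(r) dr = πλ·sqrt(πP/(σ²μ))·exp(z²μσ²/(4P))·Q(sqrt(z²μσ²/(2P))), where Q(x) = ∫_x^∞ e^{-t²/2}/√(2π) dt. -/

import Mathlib

open MeasureTheory Set Real

lemma integral_comp_add_right_Ioi' (f : ℝ → ℝ) (a c : ℝ) :
    ∫ x in Set.Ioi a, f (x + c) = ∫ x in Set.Ioi (a + c), f x := by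
  calc ∫ x in Set.Ioi a, f (x + c)
      = ∫ x, (Set.Ioi a).indicator (fun x => f (x + c)) x :=
        (integral_indicator measurableSet_Ioi).symm
    _ = ∫ x, (Set.Ioi (a + c)).indicator f (x + c) := by
        congr 1; ext x
        by_cases h : a < x
        · simp [Set.indicator, h, add_lt_add_iff_right]
        · simp [Set.indicator, h, add_lt_add_iff_right]
    _ = ∫ x, (Set.Ioi (a + c)).indicator f x :=
        integral_add_right_eq_self _ c
    _ = ∫ x in Set.Ioi (a + c), f x := integral_indicator measurableSet_Ioi

/-- Gaussian tail function. -/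
noncomputable def gaussQ (x : ℝ) : ℝ :=
  ∫ t in Set.Ioi x, Real.exp (-t ^ 2 / 2) / Real.sqrt (2 * Real.pi)

/-- Closed-form spatial average at path-loss exponent 4. -/
theorem spatial_average_eta_four
    (lam P σ2 μ : ℝ) (hlam : 0 < lam) (hP : 0 < P) (hσ2 : 0 < σ2) (hμ : 0 < μ)
    (z : ℝ)
    (hz : z = (lam * Real.pi * P / (σ2 * μ)) * (Real.sqrt μ * Real.arctan (Real.sqrt μ) + 1)) :
    ∫ r in Set.Ioi (0 : ℝ),
        2 * Real.pi * lam * r * Real.exp (-(σ2 * μ / P) * (r ^ 4 + z * r ^ 2))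
      = Real.pi * lam * Real.sqrt (Real.pi * P / (σ2 * μ))
          * Real.exp (z ^ 2 * μ * σ2 / (4 * P))
          * gaussQ (Real.sqrt (z ^ 2 * μ * σ2 / (2 * P))) := by
  set a : ℝ := σ2 * μ / P with ha_def
  have ha : 0 < a := div_pos (mul_pos hσ2 hμ) hP
  have hz0 : 0 < z := by
    rw [hz]
    apply mul_pos
    · exact div_pos (mul_pos (mul_pos hlam Real.pi_pos) hP) (mul_pos hσ2 hμ)
    · have : 0 ≤ Real.sqrt μ * Real.arctan (Real.sqrt μ) :=
        mul_nonneg (Real.sqrt_nonneg _) (by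
          rw [← Real.arctan_zero]
          exact Real.arctan_strictMono.monotone (Real.sqrt_nonneg _))
      linarith
  -- Step A: substitute u = r^2
  have stepA : (∫ r in Set.Ioi (0 : ℝ),
      2 * Real.pi * lam * r * Real.exp (-a * (r ^ 4 + z * r ^ 2)))
      = Real.pi * lam * ∫ u in Set.Ioi (0 : ℝ), Real.exp (-a * (u ^ 2 + z * u)) := by
    rw [← MeasureTheory.integral_const_mul]
    have key := MeasureTheory.integral_comp_rpow_Ioi_of_pos
      (g := fun u => Real.pi * lam * Real.exp (-a * (u ^ 2 + z * u))) (p := 2) (by norm_num)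
    rw [← key]
    refine setIntegral_congr_fun measurableSet_Ioi (fun x hx => ?_)
    have hx0 : (0:ℝ) < x := hx
    have h1 : x ^ ((2:ℝ) - 1) = x := by
      norm_num
    have h2 : x ^ (2:ℝ) = x ^ 2 := by
      rw [show (2:ℝ) = ((2:ℕ):ℝ) by norm_num, Real.rpow_natCast]
    simp only [smul_eq_mul, h1, h2]
    have h3 : (x ^ 2) ^ 2 = x ^ 4 := by ring
    rw [h3]
    ring
  -- Step B: complete the square
  have stepB : (∫ u in Set.Ioi (0 : ℝ), Real.exp (-a * (u ^ 2 + z * u)))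
      = Real.exp (a * z ^ 2 / 4) *
        ∫ u in Set.Ioi (0 : ℝ), Real.exp (-a * (u + z / 2) ^ 2) := by
    rw [← MeasureTheory.integral_const_mul]
    refine setIntegral_congr_fun measurableSet_Ioi (fun u _ => ?_)
    rw [← Real.exp_add]
    congr 1
    ring
  -- Step C: shift v = u + z/2
  have stepC : (∫ u in Set.Ioi (0 : ℝ), Real.exp (-a * (u + z / 2) ^ 2))
      = ∫ v in Set.Ioi (z / 2), Real.exp (-a * v ^ 2) := by
    have := integral_comp_add_right_Ioi' (fun v => Real.exp (-a * v ^ 2)) 0 (z / 2)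
    simpa using this
  -- Step D: scale t = sqrt (2a) * v
  set b : ℝ := Real.sqrt (2 * a) with hb_def
  have hb : 0 < b := Real.sqrt_pos.mpr (by linarith)
  have hb2 : b ^ 2 = 2 * a := Real.sq_sqrt (by linarith)
  have stepD : (∫ v in Set.Ioi (z / 2), Real.exp (-a * v ^ 2))
      = b⁻¹ * ∫ t in Set.Ioi (b * (z / 2)), Real.exp (-t ^ 2 / 2) := by
    have key := MeasureTheory.integral_comp_mul_left_Ioi
      (g := fun t => Real.exp (-t ^ 2 / 2)) (z / 2) hb
    rw [smul_eq_mul] at key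
    rw [← key]
    refine setIntegral_congr_fun measurableSet_Ioi (fun v _ => ?_)
    congr 1
    have : (b * v) ^ 2 = b ^ 2 * v ^ 2 := by ring
    rw [this, hb2]
    ring
  -- Identify the Gaussian tail endpoint
  have hx0 : Real.sqrt (z ^ 2 * μ * σ2 / (2 * P)) = b * (z / 2) := by
    have harg : z ^ 2 * μ * σ2 / (2 * P) = (b * (z / 2)) ^ 2 := by
      have : (b * (z / 2)) ^ 2 = b ^ 2 * z ^ 2 / 4 := by ring
      rw [this, hb2, ha_def]
      field_simp
      ring
    rw [harg, Real.sqrt_sq (by positivity)]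
  -- gaussQ as a scaled integral
  have hQ : gaussQ (b * (z / 2))
      = (Real.sqrt (2 * Real.pi))⁻¹ * ∫ t in Set.Ioi (b * (z / 2)), Real.exp (-t ^ 2 / 2) := by
    rw [gaussQ, ← MeasureTheory.integral_const_mul]
    refine setIntegral_congr_fun measurableSet_Ioi (fun t _ => ?_)
    rw [inv_mul_eq_div]
  -- exponent identity
  have hexp : z ^ 2 * μ * σ2 / (4 * P) = a * z ^ 2 / 4 := by
    rw [ha_def]; field_simp
  -- sqrt identity: sqrt (π P / (σ2 μ)) = sqrt (2π) / b
  have hsq : Real.sqrt (Real.pi * P / (σ2 * μ)) = Real.sqrt (2 * Real.pi) / b := by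
    rw [hb_def, ← Real.sqrt_div (by positivity : (0:ℝ) ≤ 2 * Real.pi)]
    congr 1
    rw [ha_def]
    field_simp
  rw [stepA, stepB, stepC, stepD, hx0, hQ, hexp, hsq]
  have hπ : (0:ℝ) < Real.sqrt (2 * Real.pi) := Real.sqrt_pos.mpr (by positivity)
  field_simp
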